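/- arXiv:math/0202154 — 3 statements merged into one kernel-verified Lean document; each statement's English description precedes it below -/
import Mathlib

section
/- For complex numbers x, y with |x| < 1 and |y| < 1, the product of the series Li_1(x) = Σ_{k≥1} x^k/k and Li_1(y) = Σ_{k≥1} y^k/k equals Li_{1,1}(x,y) + Li_{1,1}(y,x) + Li_2(xy), where Li_{1,1}(x,y) = Σ_{0<k<l} x^k y^l/(k·l) and Li_2(z) = Σ_{k≥1} z^k/k². -/
open scoped BigOperators

/-- The single logarithm `Li₁(x) = ∑_{k ≥ 1} x^k / k`. -/
noncomputable def Li1 (x : ℂ) : ℂ := ∑' k : ℕ, x ^ (k + 1) / (k + 1 : ℂ)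

/-- The dilogarithm `Li₂(z) = ∑_{k ≥ 1} z^k / k²`. -/
noncomputable def Li2 (z : ℂ) : ℂ := ∑' k : ℕ, z ^ (k + 1) / ((k + 1 : ℂ) ^ 2)

/-- The double logarithm `Li_{1,1}(x,y) = ∑_{0 < k < l} x^k y^l / (k l)`,
parametrized by `k = p.1 + 1` and `l = p.1 + p.2 + 2`. -/
noncomputable def Li11 (x y : ℂ) : ℂ :=
  ∑' p : ℕ × ℕ,
    x ^ (p.1 + 1) * y ^ (p.1 + p.2 + 2) / ((p.1 + 1 : ℂ) * (p.1 + p.2 + 2 : ℂ))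

/-- Parametrization of the strict lower triangle of `ℕ × ℕ`. -/
def eLT : ℕ × ℕ ≃ {p : ℕ × ℕ | p.1 < p.2} where
  toFun q := ⟨(q.1, q.1 + q.2 + 1), by simp [Set.mem_setOf_eq]⟩
  invFun p := (p.1.1, p.1.2 - p.1.1 - 1)
  left_inv q := by dsimp; exact Prod.ext rfl (by omega)
  right_inv p := by
    obtain ⟨⟨a, b⟩, hp⟩ := p
    simp only [Set.mem_setOf_eq] at hp
    apply Subtype.ext; dsimp; exact Prod.ext rfl (by omega)

/-- Parametrization of the strict upper triangle of `ℕ × ℕ`. -/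
def eGT : ℕ × ℕ ≃ {p : ℕ × ℕ | p.2 < p.1} where
  toFun q := ⟨(q.1 + q.2 + 1, q.1), by simp [Set.mem_setOf_eq]⟩
  invFun p := (p.1.2, p.1.1 - p.1.2 - 1)
  left_inv q := by dsimp; exact Prod.ext rfl (by omega)
  right_inv p := by
    obtain ⟨⟨a, b⟩, hp⟩ := p
    simp only [Set.mem_setOf_eq] at hp
    apply Subtype.ext; dsimp; exact Prod.ext (by omega) rfl

/-- Parametrization of the diagonal of `ℕ × ℕ`. -/
def eDiag : ℕ ≃ {p : ℕ × ℕ | p.1 = p.2} where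
  toFun n := ⟨(n, n), rfl⟩
  invFun p := p.1.1
  left_inv n := rfl
  right_inv p := by
    obtain ⟨⟨a, b⟩, hp⟩ := p
    simp only [Set.mem_setOf_eq] at hp
    exact Subtype.ext (Prod.ext rfl hp)

lemma summable_norm_li1 (x : ℂ) (hx : ‖x‖ < 1) :
    Summable fun k : ℕ => ‖x ^ (k + 1) / (k + 1 : ℂ)‖ := by
  have hgeo : Summable fun k : ℕ => ‖x‖ ^ (k + 1) :=
    (summable_geometric_of_lt_one (norm_nonneg x) hx).mul_left ‖x‖ |>.congr
      fun k => by ring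
  refine hgeo.of_nonneg_of_le (fun k => norm_nonneg _) fun k => ?_
  rw [norm_div, norm_pow]
  have h1 : (1 : ℝ) ≤ ‖(k + 1 : ℂ)‖ := by
    have : ((k : ℂ) + 1) = ((k + 1 : ℕ) : ℂ) := by push_cast; ring
    rw [this, Complex.norm_natCast]
    exact_mod_cast Nat.one_le_iff_ne_zero.2 (Nat.succ_ne_zero k)
  exact div_le_self (by positivity) h1

theorem stmt0 (x y : ℂ) (hx : ‖x‖ < 1) (hy : ‖y‖ < 1) :
    Li1 x * Li1 y = Li11 x y + Li11 y x + Li2 (x * y) := by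
  have hsx := summable_norm_li1 x hx
  have hsy := summable_norm_li1 y hy
  have h1 : Li1 x * Li1 y
      = ∑' p : ℕ × ℕ, x ^ (p.1 + 1) / (p.1 + 1 : ℂ) * (y ^ (p.2 + 1) / (p.2 + 1 : ℂ)) := by
    rw [Li1, Li1]
    exact tsum_mul_tsum_of_summable_norm (R := ℂ)
      (f := fun k : ℕ => x ^ (k + 1) / (k + 1 : ℂ))
      (g := fun k : ℕ => y ^ (k + 1) / (k + 1 : ℂ)) hsx hsy
  have hf : Summable
      (fun p : ℕ × ℕ => x ^ (p.1 + 1) / (p.1 + 1 : ℂ) * (y ^ (p.2 + 1) / (p.2 + 1 : ℂ))) :=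
    summable_mul_of_summable_norm (R := ℂ)
      (f := fun k : ℕ => x ^ (k + 1) / (k + 1 : ℂ))
      (g := fun k : ℕ => y ^ (k + 1) / (k + 1 : ℂ)) hsx hsy
  set f : ℕ × ℕ → ℂ :=
    fun p => x ^ (p.1 + 1) / (p.1 + 1 : ℂ) * (y ^ (p.2 + 1) / (p.2 + 1 : ℂ)) with hfdef
  -- the three regions
  set A : Set (ℕ × ℕ) := {p | p.1 < p.2} with hA
  set B : Set (ℕ × ℕ) := {p | p.2 < p.1} with hB
  set C : Set (ℕ × ℕ) := {p | p.1 = p.2} with hC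
  have hunion : A ∪ (B ∪ C) = Set.univ := by
    ext p; simp only [hA, hB, hC, Set.mem_union, Set.mem_setOf_eq, Set.mem_univ, iff_true]
    omega
  have hdBC : Disjoint B C := by
    rw [Set.disjoint_left]; intro p hp hp'
    simp only [hB, hC, Set.mem_setOf_eq] at hp hp'; omega
  have hdA : Disjoint A (B ∪ C) := by
    rw [Set.disjoint_left]; intro p hp hp'
    simp only [hA, hB, hC, Set.mem_union, Set.mem_setOf_eq] at hp hp'; omega
  have hsplit : ∑' p : ℕ × ℕ, f p
      = (∑' p : A, f p) + ((∑' p : B, f p) + (∑' p : C, f p)) := by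
    rw [← tsum_univ f, ← hunion,
      Summable.tsum_union_disjoint hdA (hf.subtype _) (hf.subtype _),
      Summable.tsum_union_disjoint hdBC (hf.subtype _) (hf.subtype _)]
  have hAeq : (∑' p : A, f p) = Li11 x y := by
    rw [Li11, ← eLT.tsum_eq (fun p : A => f p)]
    refine tsum_congr fun q => ?_
    show f (q.1, q.1 + q.2 + 1) = _
    simp only [hfdef]
    push_cast
    rw [div_mul_div_comm]
    ring_nf
  have hBeq : (∑' p : B, f p) = Li11 y x := by
    rw [Li11, ← eGT.tsum_eq (fun p : B => f p)]
    refine tsum_congr fun q => ?_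
    show f (q.1 + q.2 + 1, q.1) = _
    simp only [hfdef]
    push_cast
    rw [div_mul_div_comm]
    ring_nf
  have hCeq : (∑' p : C, f p) = Li2 (x * y) := by
    rw [Li2, ← eDiag.tsum_eq (fun p : C => f p)]
    refine tsum_congr fun n => ?_
    show f (n, n) = _
    simp only [hfdef]
    rw [div_mul_div_comm, mul_pow]
    ring_nf
  rw [h1, hsplit, hAeq, hBeq, hCeq]
  ring
end

section
/- Let ω_1, ..., ω_{p+q} be continuous 1-forms (complex-valued functions) along a smooth path γ: [0,1] → ℂ. Then the product of iterated integrals satisfies the shuffle product formula: (∫_γ ω_1∘...∘ω_p) · (∫_γ ω_{p+1}∘...∘ω_{p+q}) = Σ_{σ ∈ Σ_{p,q}} ∫_γ ω_{σ(1)}∘...∘ω_{σ(p+q)}, where Σ_{p,q} is the set of (p,q)-shuffles. -/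
open MeasureTheory
open scoped BigOperators Classical

/-- The standard ordered simplex `{0 ≤ t₁ ≤ ... ≤ t_n ≤ 1}` in `ℝ^n`. -/
def orderedSimplex (n : ℕ) : Set (Fin n → ℝ) :=
  {t | (∀ i, t i ∈ Set.Icc (0 : ℝ) 1) ∧ ∀ i j : Fin n, i ≤ j → t i ≤ t j}

/-- The iterated integral `∫_γ ω₁ ∘ ... ∘ ω_n = ∫_{0≤t₁≤...≤t_n≤1} f₁(t₁)⋯f_n(t_n) dt`,
where `f i (t) dt = γ* ω_i`. -/
noncomputable def iterIntegral {n : ℕ} (f : Fin n → ℝ → ℂ) : ℂ :=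
  ∫ t in orderedSimplex n, ∏ i, f i (t i)

/-- `σ` is a `(p,q)`-shuffle: `σ⁻¹` is increasing on `{1,...,p}` and on `{p+1,...,p+q}`. -/
def IsPQShuffle (p q : ℕ) (σ : Equiv.Perm (Fin (p + q))) : Prop :=
  ∀ i j : Fin (p + q), i < j →
    (((i : ℕ) < p ∧ (j : ℕ) < p) ∨ (p ≤ (i : ℕ) ∧ p ≤ (j : ℕ))) →
      σ.symm i < σ.symm j

section Auxiliary

open Set

/-! ### Continuous extension of functions on `[0,1]` -/

noncomputable def ext01 (f : ℝ → ℂ) : ℝ → ℂ :=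
  Set.IccExtend zero_le_one ((Set.Icc (0:ℝ) 1).restrict f)

lemma continuous_ext01 {f : ℝ → ℂ} (hf : ContinuousOn f (Set.Icc 0 1)) :
    Continuous (ext01 f) :=
  Continuous.Icc_extend' (continuousOn_iff_continuous_restrict.mp hf)

lemma ext01_eq {f : ℝ → ℂ} {x : ℝ} (hx : x ∈ Set.Icc (0:ℝ) 1) : ext01 f x = f x := by
  rw [ext01]; exact Set.IccExtend_of_mem _ _ hx

/-! ### Basic properties of the ordered simplex -/

lemma isClosed_orderedSimplex (n : ℕ) : IsClosed (orderedSimplex n) := by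
  have h : orderedSimplex n =
      (⋂ i, (fun t : Fin n → ℝ => t i) ⁻¹' Set.Icc (0:ℝ) 1) ∩
      ⋂ (i) (j) (_ : i ≤ j), {t : Fin n → ℝ | t i ≤ t j} := by
    ext t
    simp only [orderedSimplex, Set.mem_setOf_eq, Set.mem_inter_iff, Set.mem_iInter,
      Set.mem_preimage]
  rw [h]
  exact (isClosed_iInter fun i => isClosed_Icc.preimage (continuous_apply i)).inter
    (isClosed_iInter fun i => isClosed_iInter fun j => isClosed_iInter fun _ =>
      isClosed_le (continuous_apply i) (continuous_apply j))

lemma measurableSet_orderedSimplex (n : ℕ) : MeasurableSet (orderedSimplex n) :=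
  (isClosed_orderedSimplex n).measurableSet

lemma iterIntegral_congr {n : ℕ} {h h' : Fin n → ℝ → ℂ}
    (he : ∀ i x, x ∈ Set.Icc (0:ℝ) 1 → h i x = h' i x) :
    iterIntegral h = iterIntegral h' := by
  unfold iterIntegral
  refine MeasureTheory.setIntegral_congr_fun (measurableSet_orderedSimplex n) fun t ht => ?_
  exact Finset.prod_congr rfl fun i _ => he i (t i) (ht.1 i)

/-! ### Coordinate permutations as measurable equivalences -/

noncomputable def permT {n : ℕ} (σ : Equiv.Perm (Fin n)) : (Fin n → ℝ) ≃ᵐ (Fin n → ℝ) :=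
  MeasurableEquiv.piCongrLeft (π := fun _ : Fin n => ℝ) (σ.symm : Fin n ≃ Fin n)

lemma permT_apply {n : ℕ} (σ : Equiv.Perm (Fin n)) (t : Fin n → ℝ) (i : Fin n) :
    permT σ t i = t (σ i) := by
  have h := Equiv.piCongrLeft_apply_apply (P := fun _ : Fin n => ℝ)
    (e := (σ.symm : Fin n ≃ Fin n)) t (σ i)
  rw [Equiv.symm_apply_apply] at h
  exact h

lemma permT_measurePreserving {n : ℕ} (σ : Equiv.Perm (Fin n)) :
    MeasureTheory.MeasurePreserving (permT σ) volume volume :=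
  MeasureTheory.volume_measurePreserving_piCongrLeft (fun _ : Fin n => ℝ) (σ.symm : Fin n ≃ Fin n)

/-! ### The hyperplanes of non-injective tuples -/

def nonInj (n : ℕ) : Set (Fin n → ℝ) :=
  ⋃ (i : Fin n) (j : Fin n) (_ : i ≠ j), {t | t i = t j}

lemma volume_nonInj (n : ℕ) : volume (nonInj n) = 0 := by
  refine MeasureTheory.measure_iUnion_null fun i =>
    MeasureTheory.measure_iUnion_null fun j => MeasureTheory.measure_iUnion_null fun hij => ?_
  have hsub : {t : Fin n → ℝ | t i = t j} ⊆
      (LinearMap.ker ((LinearMap.proj i : (Fin n → ℝ) →ₗ[ℝ] ℝ) - LinearMap.proj j) : Set _) := by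
    intro t ht
    simp only [SetLike.mem_coe, LinearMap.mem_ker, LinearMap.sub_apply, LinearMap.proj_apply,
      sub_eq_zero]
    exact ht
  refine MeasureTheory.measure_mono_null hsub
    (MeasureTheory.Measure.addHaar_submodule volume _ ?_)
  intro htop
  have h1 : ((Pi.single i (1:ℝ)) : Fin n → ℝ) ∈
      LinearMap.ker ((LinearMap.proj i : (Fin n → ℝ) →ₗ[ℝ] ℝ) - LinearMap.proj j) := by
    rw [htop]; trivial
  rw [LinearMap.mem_ker, LinearMap.sub_apply, LinearMap.proj_apply, LinearMap.proj_apply,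
    Pi.single_eq_same, Pi.single_eq_of_ne hij.symm, sub_zero] at h1
  exact one_ne_zero h1

lemma injective_of_not_mem_nonInj {n : ℕ} {t : Fin n → ℝ} (h : t ∉ nonInj n) :
    Function.Injective t := by
  intro i j hij
  by_contra hne
  exact h (Set.mem_iUnion.mpr ⟨i, Set.mem_iUnion.mpr ⟨j, Set.mem_iUnion.mpr ⟨hne, hij⟩⟩⟩)

lemma measurableSet_nonInj (n : ℕ) : MeasurableSet (nonInj n) :=
  MeasurableSet.iUnion fun i => MeasurableSet.iUnion fun j => MeasurableSet.iUnion fun _ =>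
    measurableSet_eq_fun (measurable_pi_apply i) (measurable_pi_apply j)

/-! ### The pieces `pieceA σ` and the big region `bigS` -/

def pieceA {n : ℕ} (σ : Equiv.Perm (Fin n)) : Set (Fin n → ℝ) :=
  (permT σ) ⁻¹' orderedSimplex n

lemma mem_pieceA {n : ℕ} {σ : Equiv.Perm (Fin n)} {t : Fin n → ℝ} :
    t ∈ pieceA σ ↔ (fun i => t (σ i)) ∈ orderedSimplex n := by
  have h : permT σ t = fun i => t (σ i) := funext fun i => permT_apply σ t i
  rw [pieceA, Set.mem_preimage, h]

lemma measurableSet_pieceA {n : ℕ} (σ : Equiv.Perm (Fin n)) : MeasurableSet (pieceA σ) :=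
  (permT σ).measurable (measurableSet_orderedSimplex n)

def bigS (p q : ℕ) : Set (Fin (p+q) → ℝ) :=
  {t | (∀ i, t i ∈ Set.Icc (0:ℝ) 1) ∧
    ∀ i j : Fin (p+q), i < j →
      (((i:ℕ) < p ∧ (j:ℕ) < p) ∨ (p ≤ (i:ℕ) ∧ p ≤ (j:ℕ))) → t i ≤ t j}

lemma isClosed_bigS (p q : ℕ) : IsClosed (bigS p q) := by
  have h : bigS p q =
      (⋂ i, (fun t : Fin (p+q) → ℝ => t i) ⁻¹' Set.Icc (0:ℝ) 1) ∩
      ⋂ (i : Fin (p+q)) (j : Fin (p+q)) (_ : i < j)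
        (_ : ((i:ℕ) < p ∧ (j:ℕ) < p) ∨ (p ≤ (i:ℕ) ∧ p ≤ (j:ℕ))),
        {t : Fin (p+q) → ℝ | t i ≤ t j} := by
    ext t
    simp only [bigS, Set.mem_setOf_eq, Set.mem_inter_iff, Set.mem_iInter, Set.mem_preimage]
  rw [h]
  exact (isClosed_iInter fun i => isClosed_Icc.preimage (continuous_apply i)).inter
    (isClosed_iInter fun i => isClosed_iInter fun j => isClosed_iInter fun _ =>
      isClosed_iInter fun _ => isClosed_le (continuous_apply i) (continuous_apply j))

lemma bigS_subset_Icc (p q : ℕ) : bigS p q ⊆ Set.Icc (0 : Fin (p+q) → ℝ) 1 := by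
  intro t ht
  rw [Set.mem_Icc]
  exact ⟨fun i => (ht.1 i).1, fun i => (ht.1 i).2⟩

lemma isCompact_bigS (p q : ℕ) : IsCompact (bigS p q) :=
  IsCompact.of_isClosed_subset isCompact_Icc (isClosed_bigS p q) (bigS_subset_Icc p q)

lemma pieceA_subset {p q : ℕ} {σ : Equiv.Perm (Fin (p+q))} (hσ : IsPQShuffle p q σ) :
    pieceA σ ⊆ bigS p q := by
  intro t ht
  rw [mem_pieceA] at ht
  obtain ⟨h1, h2⟩ := ht
  constructor
  · intro i
    have h := h1 (σ.symm i)
    simpa using h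
  · intro i j hij hblk
    have hlt := hσ i j hij hblk
    have h := h2 (σ.symm i) (σ.symm j) hlt.le
    simpa using h

lemma bigS_subset_iUnion (p q : ℕ) :
    bigS p q ⊆ ⋃ σ ∈ Finset.univ.filter
      (fun σ : Equiv.Perm (Fin (p+q)) => IsPQShuffle p q σ), pieceA σ := by
  intro t ht
  set σ := Tuple.sort t with hσdef
  have hmono : Monotone (t ∘ σ) := hσdef ▸ Tuple.monotone_sort t
  have hstab := (Tuple.eq_sort_iff.mp hσdef).2
  have hshuffle : IsPQShuffle p q σ := by
    intro i j hij hblk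
    have hle : t i ≤ t j := ht.2 i j hij hblk
    rcases lt_trichotomy (σ.symm i) (σ.symm j) with h | h | h
    · exact h
    · exfalso
      apply hij.ne
      have h' := congrArg σ h
      simpa using h'
    · exfalso
      have h1 : t j ≤ t i := by
        have h' := hmono h.le
        simpa using h'
      have heq : t (σ (σ.symm j)) = t (σ (σ.symm i)) := by
        simp only [Equiv.apply_symm_apply]
        exact le_antisymm h1 hle
      have h2 := hstab _ _ h heq
      simp only [Equiv.apply_symm_apply] at h2
      exact absurd hij (not_lt.mpr h2.le)
  have hmem : t ∈ pieceA σ :=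
    mem_pieceA.mpr ⟨fun i => ht.1 (σ i), fun i j hij => hmono hij⟩
  refine Set.mem_iUnion.mpr ⟨σ, Set.mem_iUnion.mpr ⟨?_, hmem⟩⟩
  exact Finset.mem_filter.mpr ⟨Finset.mem_univ _, hshuffle⟩

lemma perm_eq_of_mem_pieces {n : ℕ} {σ τ : Equiv.Perm (Fin n)} {t : Fin n → ℝ}
    (hσ : t ∈ pieceA σ) (hτ : t ∈ pieceA τ) (hinj : Function.Injective t) : σ = τ := by
  rw [mem_pieceA] at hσ hτ
  have h1 : Monotone (t ∘ σ) := fun a b hab => hσ.2 a b hab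
  have h2 : Monotone (t ∘ τ) := fun a b hab => hτ.2 a b hab
  have h := Tuple.unique_monotone h1 h2
  exact Equiv.ext fun i => hinj (congrFun h i)

/-! ### Packing the product of two cubes into one -/

noncomputable def packEquiv (p q : ℕ) : ((Fin p → ℝ) × (Fin q → ℝ)) ≃ᵐ (Fin (p+q) → ℝ) :=
  (MeasurableEquiv.sumPiEquivProdPi (fun _ : Fin p ⊕ Fin q => ℝ)).symm.trans
    (MeasurableEquiv.piCongrLeft (π := fun _ : Fin (p+q) => ℝ) finSumFinEquiv)

lemma packEquiv_apply_left (p q : ℕ) (x : Fin p → ℝ) (y : Fin q → ℝ) (i : Fin p) :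
    packEquiv p q (x, y) (Fin.castAdd q i) = x i := by
  rw [← finSumFinEquiv_apply_left i]
  exact Equiv.piCongrLeft_sumInl (fun _ : Fin (p+q) => ℝ) finSumFinEquiv x y i

lemma packEquiv_apply_right (p q : ℕ) (x : Fin p → ℝ) (y : Fin q → ℝ) (j : Fin q) :
    packEquiv p q (x, y) (Fin.natAdd p j) = y j := by
  rw [← finSumFinEquiv_apply_right j]
  exact Equiv.piCongrLeft_sumInr (fun _ : Fin (p+q) => ℝ) finSumFinEquiv x y j

lemma packEquiv_measurePreserving (p q : ℕ) :
    MeasureTheory.MeasurePreserving (packEquiv p q) volume volume := by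
  have h1 := MeasureTheory.volume_measurePreserving_sumPiEquivProdPi_symm
    (fun _ : Fin p ⊕ Fin q => ℝ)
  have h2 := MeasureTheory.volume_measurePreserving_piCongrLeft
    (fun _ : Fin (p+q) => ℝ) finSumFinEquiv
  exact h2.comp h1

lemma packEquiv_preimage (p q : ℕ) :
    packEquiv p q ⁻¹' bigS p q = orderedSimplex p ×ˢ orderedSimplex q := by
  ext z
  obtain ⟨x, y⟩ := z
  simp only [Set.mem_preimage, Set.mem_prod]
  constructor
  · rintro ⟨h1, h2⟩
    refine ⟨⟨fun i => ?_, fun i j hij => ?_⟩, fun j => ?_, fun i j hij => ?_⟩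
    · have h := h1 (Fin.castAdd q i)
      rwa [packEquiv_apply_left] at h
    · rcases eq_or_lt_of_le hij with rfl | hlt
      · exact le_refl _
      · have hcast : (Fin.castAdd q i) < (Fin.castAdd q j) := by
          rw [Fin.lt_def]
          simpa using hlt
        have h := h2 _ _ hcast (Or.inl ⟨by simpa using i.isLt, by simpa using j.isLt⟩)
        rwa [packEquiv_apply_left, packEquiv_apply_left] at h
    · have h := h1 (Fin.natAdd p j)
      rwa [packEquiv_apply_right] at h
    · rcases eq_or_lt_of_le hij with rfl | hlt
      · exact le_refl _
      · have hnat : (Fin.natAdd p i) < (Fin.natAdd p j) := by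
          rw [Fin.lt_def]
          simpa using hlt
        have h := h2 _ _ hnat (Or.inr ⟨by simp, by simp⟩)
        rwa [packEquiv_apply_right, packEquiv_apply_right] at h
  · rintro ⟨hx, hy⟩
    constructor
    · intro k
      refine Fin.addCases (fun i => ?_) (fun j => ?_) k
      · rw [packEquiv_apply_left]; exact hx.1 i
      · rw [packEquiv_apply_right]; exact hy.1 j
    · intro k l hkl hblk
      rcases hblk with ⟨hk, hl⟩ | ⟨hk, hl⟩
      · have hk' : k = Fin.castAdd q ⟨(k : ℕ), hk⟩ := Fin.ext (by simp)
        have hl' : l = Fin.castAdd q ⟨(l : ℕ), hl⟩ := Fin.ext (by simp)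
        rw [hk', hl', packEquiv_apply_left, packEquiv_apply_left]
        exact hx.2 _ _ (by rw [Fin.mk_le_mk]; exact le_of_lt hkl)
      · have hk2 : (k : ℕ) - p < q := by omega
        have hl2 : (l : ℕ) - p < q := by omega
        have hk' : k = Fin.natAdd p ⟨(k : ℕ) - p, hk2⟩ := Fin.ext (by simp; omega)
        have hl' : l = Fin.natAdd p ⟨(l : ℕ) - p, hl2⟩ := Fin.ext (by simp; omega)
        rw [hk', hl', packEquiv_apply_right, packEquiv_apply_right]
        refine hy.2 _ _ ?_
        rw [Fin.mk_le_mk]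
        have := hkl.le
        rw [Fin.le_def] at this
        omega

end Auxiliary

open MeasureTheory in
theorem shuffle_main (p q : ℕ) (g : Fin (p + q) → ℝ → ℂ) (hg : ∀ i, Continuous (g i)) :
    iterIntegral (fun i : Fin p => g (Fin.castAdd q i)) *
      iterIntegral (fun j : Fin q => g (Fin.natAdd p j)) =
    ∑ σ ∈ Finset.univ.filter (fun σ : Equiv.Perm (Fin (p + q)) => IsPQShuffle p q σ),
      iterIntegral (fun i => g (σ i)) := by
  classical
  set G : (Fin (p+q) → ℝ) → ℂ := fun t => ∏ i, g i (t i) with hGdef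
  have hGc : Continuous G := continuous_finset_prod _ fun i _ => (hg i).comp (continuous_apply i)
  set F := Finset.univ.filter (fun σ : Equiv.Perm (Fin (p + q)) => IsPQShuffle p q σ) with hF
  -- Step 1: the product of the two iterated integrals is the integral over `bigS`.
  have step1 : iterIntegral (fun i : Fin p => g (Fin.castAdd q i)) *
      iterIntegral (fun j : Fin q => g (Fin.natAdd p j)) = ∫ t in bigS p q, G t := by
    have e1 := setIntegral_prod_mul (μ := (volume : Measure (Fin p → ℝ)))
      (ν := (volume : Measure (Fin q → ℝ)))
      (fun x : Fin p → ℝ => ∏ i, g (Fin.castAdd q i) (x i))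
      (fun y : Fin q → ℝ => ∏ j, g (Fin.natAdd p j) (y j))
      (orderedSimplex p) (orderedSimplex q)
    calc iterIntegral (fun i : Fin p => g (Fin.castAdd q i)) *
        iterIntegral (fun j : Fin q => g (Fin.natAdd p j))
        = ∫ z in (orderedSimplex p ×ˢ orderedSimplex q),
            (∏ i, g (Fin.castAdd q i) (z.1 i)) * ∏ j, g (Fin.natAdd p j) (z.2 j)
            ∂((volume : Measure (Fin p → ℝ)).prod (volume : Measure (Fin q → ℝ))) := by
          simp only [iterIntegral]
          exact e1.symm
      _ = ∫ z in packEquiv p q ⁻¹' bigS p q, G (packEquiv p q z)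
            ∂((volume : Measure (Fin p → ℝ)).prod (volume : Measure (Fin q → ℝ))) := by
          rw [packEquiv_preimage]
          refine integral_congr_ae (Filter.Eventually.of_forall fun z => ?_)
          obtain ⟨x, y⟩ := z
          show (∏ i, g (Fin.castAdd q i) (x i)) * (∏ j, g (Fin.natAdd p j) (y j))
            = ∏ k, g k (packEquiv p q (x, y) k)
          rw [Fin.prod_univ_add (f := fun k => g k (packEquiv p q (x, y) k))]
          congr 1
          · exact Finset.prod_congr rfl fun i _ => by rw [packEquiv_apply_left]
          · exact Finset.prod_congr rfl fun j _ => by rw [packEquiv_apply_right]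
      _ = ∫ t in bigS p q, G t := by
          rw [← MeasureTheory.Measure.volume_eq_prod]
          exact (packEquiv_measurePreserving p q).setIntegral_preimage_emb
            (packEquiv p q).measurableEmbedding G (bigS p q)
  -- Step 2: decompose the integral over `bigS` into the pieces.
  have hGint : IntegrableOn G (bigS p q) :=
    hGc.continuousOn.integrableOn_compact (isCompact_bigS p q)
  have hcover : bigS p q = ⋃ σ ∈ F, pieceA σ := by
    refine subset_antisymm (bigS_subset_iUnion p q) ?_
    intro t ht
    simp only [Set.mem_iUnion] at ht
    obtain ⟨σ, hσF, htσ⟩ := ht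
    exact pieceA_subset (Finset.mem_filter.mp hσF).2 htσ
  have hnull : ∀ s : Set (Fin (p+q) → ℝ), volume (s ∩ nonInj (p+q)) = 0 :=
    fun s => measure_mono_null Set.inter_subset_right (volume_nonInj _)
  have hae : ∀ s : Set (Fin (p+q) → ℝ), (s \ nonInj (p+q) : Set _) =ᵐ[volume] s :=
    fun s => MeasureTheory.diff_ae_eq_self.mpr (hnull s)
  have step2 : ∫ t in bigS p q, G t = ∑ σ ∈ F, ∫ t in pieceA σ, G t := by
    calc ∫ t in bigS p q, G t
        = ∫ t in bigS p q \ nonInj (p+q), G t := (setIntegral_congr_set (hae _)).symm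
      _ = ∫ t in ⋃ σ ∈ F, (pieceA σ \ nonInj (p+q)), G t := by
          have h : (⋃ σ ∈ F, pieceA σ) \ nonInj (p+q)
              = ⋃ σ ∈ F, (pieceA σ \ nonInj (p+q)) := by
            simp only [Set.iUnion_diff]
          rw [hcover, h]
      _ = ∑ σ ∈ F, ∫ t in pieceA σ \ nonInj (p+q), G t := by
          refine integral_biUnion_finset F (fun σ _ => ?_) ?_ (fun σ hσ => ?_)
          · exact (measurableSet_pieceA σ).diff (measurableSet_nonInj _)
          · intro σ _ τ _ hστ
            refine Set.disjoint_left.mpr fun t htσ htτ => ?_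
            exact hστ (perm_eq_of_mem_pieces htσ.1 htτ.1
              (injective_of_not_mem_nonInj htσ.2))
          · refine hGint.mono_set ?_
            refine Set.Subset.trans Set.diff_subset ?_
            exact pieceA_subset (Finset.mem_filter.mp hσ).2
      _ = ∑ σ ∈ F, ∫ t in pieceA σ, G t :=
          Finset.sum_congr rfl fun σ _ => setIntegral_congr_set (hae _)
  -- Step 3: each piece gives an iterated integral.
  have step3 : ∀ σ : Equiv.Perm (Fin (p+q)),
      ∫ t in pieceA σ, G t = iterIntegral (fun i => g (σ i)) := by
    intro σ
    have h1 : ∀ t : Fin (p+q) → ℝ, G t = (fun y : Fin (p+q) → ℝ => ∏ i, g (σ i) (y i))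
        (permT σ t) := by
      intro t
      show (∏ i, g i (t i)) = ∏ i, g (σ i) ((permT σ t) i)
      calc (∏ i, g i (t i)) = ∏ i, g (σ i) (t (σ i)) :=
            (Equiv.prod_comp σ fun i => g i (t i)).symm
        _ = ∏ i, g (σ i) ((permT σ t) i) :=
            Finset.prod_congr rfl fun i _ => by rw [permT_apply]
    calc ∫ t in pieceA σ, G t
        = ∫ t in (permT σ) ⁻¹' orderedSimplex (p+q),
            (fun y : Fin (p+q) → ℝ => ∏ i, g (σ i) (y i)) (permT σ t) :=
          integral_congr_ae (Filter.Eventually.of_forall fun t => h1 t)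
      _ = ∫ y in orderedSimplex (p+q), ∏ i, g (σ i) (y i) :=
          (permT_measurePreserving σ).setIntegral_preimage_emb
            (permT σ).measurableEmbedding (fun y : Fin (p+q) → ℝ => ∏ i, g (σ i) (y i))
            (orderedSimplex (p+q))
      _ = iterIntegral (fun i => g (σ i)) := by simp only [iterIntegral]
  rw [step1, step2]
  exact Finset.sum_congr rfl fun σ _ => step3 σ

/-- The shuffle product formula for iterated integrals: the product of the iterated
integrals of `ω₁,...,ω_p` and of `ω_{p+1},...,ω_{p+q}` along a path is the sum over
all `(p,q)`-shuffles `σ` of the iterated integral of `ω_{σ(1)},...,ω_{σ(p+q)}`. -/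
theorem stmt4 (p q : ℕ) (f : Fin (p + q) → ℝ → ℂ)
    (hf : ∀ i, ContinuousOn (f i) (Set.Icc (0 : ℝ) 1)) :
    iterIntegral (fun i : Fin p => f (Fin.castAdd q i)) *
      iterIntegral (fun j : Fin q => f (Fin.natAdd p j)) =
    ∑ σ ∈ Finset.univ.filter (fun σ : Equiv.Perm (Fin (p + q)) => IsPQShuffle p q σ),
      iterIntegral (fun i => f (σ i)) := by
  classical
  set g : Fin (p+q) → ℝ → ℂ := fun i => ext01 (f i) with hg
  have hgc : ∀ i, Continuous (g i) := fun i => continuous_ext01 (hf i)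
  have h1 : iterIntegral (fun i : Fin p => f (Fin.castAdd q i))
      = iterIntegral (fun i : Fin p => g (Fin.castAdd q i)) :=
    iterIntegral_congr fun i x hx => (ext01_eq hx).symm
  have h2 : iterIntegral (fun j : Fin q => f (Fin.natAdd p j))
      = iterIntegral (fun j : Fin q => g (Fin.natAdd p j)) :=
    iterIntegral_congr fun i x hx => (ext01_eq hx).symm
  have h3 : ∀ σ : Equiv.Perm (Fin (p+q)),
      iterIntegral (fun i => g (σ i)) = iterIntegral (fun i => f (σ i)) :=
    fun σ => iterIntegral_congr fun i x hx => ext01_eq hx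
  rw [h1, h2, shuffle_main p q g hgc]
  exact Finset.sum_congr rfl fun σ _ => h3 σ
end

section
/- Kronecker's formula: for real φ with 0 < φ < 1 and complex t not an integer, the symmetrized series Σ_{k∈ℤ} e^{2πi φ k}/(k − t) (summed symmetrically as lim_{N→∞} Σ_{|k|≤N}) equals −2πi · e^{2πi φ t}/(e^{2πi t} − 1). -/
open Filter MeasureTheory Complex intervalIntegral
open scoped Real FourierTransform BigOperators

section helpers

lemma two_pi_I_ne : (2*(Real.pi:ℂ)*I) ≠ 0 := by
  simp [Real.pi_ne_zero, Complex.I_ne_zero]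

lemma exp_ne_one_of_nonint (z : ℂ) (hz : ∀ n : ℤ, z ≠ (n:ℂ)) :
    Complex.exp (2*(Real.pi:ℂ)*I*z) ≠ 1 := by
  intro h
  rw [Complex.exp_eq_one_iff] at h
  obtain ⟨n, hn⟩ := h
  apply hz n
  have : (2*(Real.pi:ℂ)*I) * z = (2*(Real.pi:ℂ)*I) * n := by rw [hn]; ring
  exact mul_left_cancel₀ two_pi_I_ne this

lemma den_ne (φ x : ℝ) (hφ0 : 0 < φ) (hφ1 : φ < 1) (hx0 : 0 ≤ x) (hx1 : x ≤ 1)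
    (hxφ : x ≠ φ) : Complex.exp (2*(Real.pi:ℂ)*I*((φ:ℂ)-(x:ℂ))) ≠ 1 := by
  apply exp_ne_one_of_nonint
  intro n hn
  have hn' : ((φ - x : ℝ) : ℂ) = (n:ℂ) := by push_cast; exact hn
  have hr : φ - x = (n:ℝ) := by exact_mod_cast hn'
  have b1 : (-1:ℤ) < n := by exact_mod_cast show (-1:ℝ) < (n:ℝ) by rw [← hr]; linarith
  have b2 : n < 1 := by exact_mod_cast show ((n:ℝ)) < 1 by rw [← hr]; linarith
  have : n = 0 := by omega
  rw [this] at hr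
  simp at hr
  exact hxφ (by linarith)

lemma rl_aux (H : ℝ → ℂ) :
    Tendsto (fun w : ℝ => ∫ x in (0:ℝ)..1, Complex.exp (2 * (π:ℂ) * I * w * x) * H x)
      (cocompact ℝ) (nhds 0) := by
  set f : ℝ → ℂ := Set.indicator (Set.Icc (0:ℝ) 1) H with hf
  have key : ∀ w : ℝ, (∫ x in (0:ℝ)..1, Complex.exp (2 * (π:ℂ) * I * w * x) * H x)
      = 𝓕 f (-w) := by
    intro w
    rw [Real.fourier_real_eq_integral_exp_smul]
    have : (fun v : ℝ => Complex.exp (↑(-2 * π * v * (-w)) * I) • f v)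
        = Set.indicator (Set.Icc (0:ℝ) 1)
            (fun v : ℝ => Complex.exp (2 * (π:ℂ) * I * w * v) * H v) := by
      ext v
      by_cases hv : v ∈ Set.Icc (0:ℝ) 1
      · simp only [hf, Set.indicator_of_mem hv, smul_eq_mul]
        congr 1
        push_cast
        ring_nf
      · simp [hf, Set.indicator_of_notMem hv]
    rw [this, MeasureTheory.integral_indicator measurableSet_Icc, integral_Icc_eq_integral_Ioc,
      ← intervalIntegral.integral_of_le (by norm_num : (0:ℝ) ≤ 1)]
  simp_rw [key]
  have hneg : Tendsto (fun w : ℝ => -w) (cocompact ℝ) (cocompact ℝ) := by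
    exact (Homeomorph.neg ℝ).map_cocompact.le
  exact (Real.zero_at_infty_fourier f).comp hneg

lemma kernel_eq (r : ℂ) (hr : r ≠ 0) (N : ℕ) :
    (r - 1) * ∑ k ∈ Finset.Icc (-(N:ℤ)) (N:ℤ), r ^ k
      = r ^ ((N:ℤ)+1) - r ^ (-(N:ℤ)) := by
  induction N with
  | zero => simp [mul_comm]
  | succ N ih =>
    have hins : Finset.Icc (-(N+1:ℤ)) (N+1:ℤ)
        = insert (-(N+1:ℤ)) (insert ((N+1:ℤ)) (Finset.Icc (-(N:ℤ)) (N:ℤ))) := by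
      ext k; simp only [Finset.mem_insert, Finset.mem_Icc]; omega
    have h1 : (-(N+1:ℤ)) ∉ insert ((N+1:ℤ)) (Finset.Icc (-(N:ℤ)) (N:ℤ)) := by
      simp only [Finset.mem_insert, Finset.mem_Icc]; omega
    have h2 : ((N+1:ℤ)) ∉ Finset.Icc (-(N:ℤ)) (N:ℤ) := by
      simp only [Finset.mem_Icc]; omega
    push_cast
    rw [hins, Finset.sum_insert h1, Finset.sum_insert h2, mul_add, mul_add]
    push_cast at ih
    rw [ih]
    have key : ∀ m : ℤ, r * r ^ m = r ^ (m + 1) := fun m => by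
      rw [zpow_add_one₀ hr, mul_comm]
    have e1 : (-(N:ℤ)-1) + 1 = -(N:ℤ) := by ring
    rw [sub_mul, sub_mul, one_mul, one_mul, key, key]
    rw [show (-((N:ℤ)+1)) = (-(N:ℤ)-1) by ring, e1]
    ring_nf

noncomputable def Hfun (φ : ℝ) (t : ℂ) : ℝ → ℂ := fun x =>
  if x = φ then -t * Complex.exp (2*(Real.pi:ℂ)*I*t*φ)
  else (Complex.exp (2*(Real.pi:ℂ)*I*t*x) - Complex.exp (2*(Real.pi:ℂ)*I*t*φ)) /
       (Complex.exp (2*(Real.pi:ℂ)*I*((φ:ℂ)-(x:ℂ))) - 1)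

lemma contOn_H (φ : ℝ) (hφ0 : 0 < φ) (hφ1 : φ < 1) (t : ℂ) :
    ContinuousOn (Hfun φ t) (Set.Icc 0 1) := by
  set c2 : ℂ := 2*(Real.pi:ℂ)*I with hc2
  intro x hx
  by_cases hxφ : x = φ
  · subst hxφ
    apply ContinuousAt.continuousWithinAt
    rw [← continuousWithinAt_compl_self]
    set f : ℝ → ℂ := fun y => Complex.exp (c2*t*y) with hfdef
    set g : ℝ → ℂ := fun y => Complex.exp (c2*((x:ℂ)-(y:ℂ))) with hgdef
    have hf : HasDerivAt f (Complex.exp (c2*t*x) * (c2*t)) x := by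
      have A : HasDerivAt (fun z:ℂ => Complex.exp (c2*t*z))
          (Complex.exp (c2*t*x) * (c2*t)) (x:ℂ) := by
        simpa using ((hasDerivAt_id ((x:ℝ):ℂ)).const_mul (c2*t)).cexp
      exact A.comp_ofReal
    have hg : HasDerivAt g (-c2) x := by
      have A : HasDerivAt (fun z:ℂ => Complex.exp (c2*((x:ℂ)-z)))
          (-c2) (x:ℂ) := by
        have B := (((hasDerivAt_id ((x:ℝ):ℂ)).const_sub ((x:ℝ):ℂ)).const_mul c2).cexp
        simpa using B
      exact A.comp_ofReal
    have hfs := hasDerivAt_iff_tendsto_slope.mp hf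
    have hgs := hasDerivAt_iff_tendsto_slope.mp hg
    have hc2ne : c2 ≠ 0 := two_pi_I_ne
    have hdiv := hfs.div hgs (by simpa using hc2ne)
    have heq : ∀ᶠ y in nhdsWithin x {x}ᶜ,
        slope f x y / slope g x y = Hfun x t y := by
      filter_upwards [self_mem_nhdsWithin] with y hy
      have hyx : y ≠ x := hy
      have hne : (((y - x : ℝ):ℂ))⁻¹ ≠ 0 :=
        inv_ne_zero (by exact_mod_cast sub_ne_zero.mpr hyx)
      rw [slope_def_module, slope_def_module]
      simp only [Hfun, if_neg hyx, hfdef, hgdef]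
      rw [show Complex.exp (c2*((x:ℂ)-(x:ℂ))) = 1 by simp]
      rw [Complex.real_smul, Complex.real_smul, Complex.ofReal_inv,
        mul_div_mul_left _ _ hne]
    have hlim := hdiv.congr' heq
    have hval : Complex.exp (c2*t*x) * (c2*t) / (-c2) = Hfun x t x := by
      simp only [Hfun, eq_self_iff_true, if_true, ← hc2]
      rw [div_eq_iff (neg_ne_zero.mpr hc2ne)]
      ring
    rw [hval] at hlim
    exact hlim
  · apply ContinuousAt.continuousWithinAt
    have hev : Hfun φ t =ᶠ[nhds x] (fun y =>
        (Complex.exp (c2*t*y) - Complex.exp (c2*t*φ)) /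
          (Complex.exp (c2*((φ:ℂ)-(y:ℂ))) - 1)) := by
      filter_upwards [isOpen_compl_singleton.mem_nhds
        (by simpa using hxφ : x ∈ ({φ}ᶜ : Set ℝ))] with y hy
      simp only [Hfun, if_neg (by simpa using hy : y ≠ φ)]
      rw [hc2]
    rw [continuousAt_congr hev]
    apply ContinuousAt.div
    · exact ((Complex.continuous_exp.comp
        ((continuous_const.mul Complex.continuous_ofReal))).sub continuous_const).continuousAt
    · exact ((Complex.continuous_exp.comp
        (continuous_const.mul (continuous_const.sub Complex.continuous_ofReal))).sub
          continuous_const).continuousAt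
    · exact sub_ne_zero.mpr (den_ne φ x hφ0 hφ1 hx.1 hx.2 hxφ)

lemma norm_exp_two_pi_I (r : ℝ) : ‖Complex.exp (2*(Real.pi:ℂ)*I*(r:ℂ))‖ = 1 := by
  rw [show (2*(Real.pi:ℂ)*I*(r:ℂ)) = ((2*Real.pi*r : ℝ):ℂ) * I by push_cast; ring]
  rw [Complex.norm_exp_ofReal_mul_I]

end helpers

/-- Kronecker's formula: for `0 < φ < 1` and `t ∈ ℂ ∖ ℤ`, the symmetric limit
`lim_{N→∞} ∑_{|k| ≤ N} e^{2πiφk}/(k − t) = −2πi · e^{2πiφt}/(e^{2πit} − 1)`. -/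
theorem stmt14 (φ : ℝ) (hφ0 : 0 < φ) (hφ1 : φ < 1) (t : ℂ) (ht : ∀ k : ℤ, t ≠ (k : ℂ)) :
    Tendsto (fun N : ℕ => ∑ k ∈ Finset.Icc (-(N : ℤ)) (N : ℤ),
        Complex.exp (2 * (Real.pi : ℂ) * Complex.I * (φ : ℂ) * (k : ℂ)) / ((k : ℂ) - t))
      atTop
      (nhds (-(2 * (Real.pi : ℂ) * Complex.I) *
        Complex.exp (2 * (Real.pi : ℂ) * Complex.I * (φ : ℂ) * t) /
          (Complex.exp (2 * (Real.pi : ℂ) * Complex.I * t) - 1))) := by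
  set c2 : ℂ := 2*(Real.pi:ℂ)*I with hc2
  have hc2ne : c2 ≠ 0 := two_pi_I_ne
  set E : ℂ := Complex.exp (c2*t) with hE
  have hE1 : E - 1 ≠ 0 := sub_ne_zero.mpr (exp_ne_one_of_nonint t ht)
  set c : ℂ := -c2 / (E - 1) with hc
  set L : ℂ := c * Complex.exp (c2*(φ:ℂ)*t) with hL
  -- `S N` is the partial sum, `T N` the integral form
  set S : ℕ → ℂ := fun N => ∑ k ∈ Finset.Icc (-(N : ℤ)) (N : ℤ),
      Complex.exp (c2 * (φ : ℂ) * (k : ℂ)) / ((k : ℂ) - t) with hS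
  -- step 1: term identity
  have term_eq : ∀ k : ℤ, Complex.exp (c2 * (φ:ℂ) * (k:ℂ)) / ((k:ℂ) - t)
      = c * ∫ x in (0:ℝ)..1,
          Complex.exp (c2*t*x) * Complex.exp (c2*(k:ℂ)*((φ:ℂ)-(x:ℝ))) := by
    intro k
    have hk : t - (k:ℂ) ≠ 0 := sub_ne_zero.mpr (ht k)
    have hck : c2 * (t - k) ≠ 0 := mul_ne_zero hc2ne hk
    have hint : (∫ x in (0:ℝ)..1, Complex.exp (c2*(t-(k:ℂ))*x))
        = (E - 1) / (c2*(t-(k:ℂ))) := by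
      rw [integral_exp_mul_complex hck]
      congr 2
      · rw [show c2*(t-(k:ℂ))*((1:ℝ):ℂ) = c2*t + (-k:ℤ)*(2*(Real.pi:ℂ)*I) by push_cast; rw [hc2]; ring]
        rw [Complex.exp_add, Complex.exp_int_mul_two_pi_mul_I, mul_one]
      · simp
    have integrand_eq : ∀ x : ℝ, Complex.exp (c2*t*x) * Complex.exp (c2*(k:ℂ)*((φ:ℂ)-(x:ℝ)))
        = Complex.exp (c2*(φ:ℂ)*(k:ℂ)) * Complex.exp (c2*(t-(k:ℂ))*x) := by
      intro x
      rw [← Complex.exp_add, ← Complex.exp_add]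
      congr 1
      ring
    simp_rw [integrand_eq]
    rw [intervalIntegral.integral_const_mul, hint]
    have hk' : (k:ℂ) - t ≠ 0 := sub_ne_zero.mpr (Ne.symm (ht k))
    rw [hc]
    rw [div_eq_iff hk']
    field_simp
    ring
  -- kernel
  set K : ℕ → ℝ → ℂ := fun N x => ∑ k ∈ Finset.Icc (-(N:ℤ)) (N:ℤ),
      Complex.exp (c2*(k:ℂ)*((φ:ℂ)-(x:ℝ))) with hK
  have contK : ∀ N : ℕ, Continuous (K N) := by
    intro N
    apply continuous_finset_sum
    intro k _
    exact Complex.continuous_exp.comp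
      (continuous_const.mul (continuous_const.sub Complex.continuous_ofReal))
  have cont_e : Continuous (fun x : ℝ => Complex.exp (c2*t*x)) :=
    Complex.continuous_exp.comp (continuous_const.mul Complex.continuous_ofReal)
  -- step 2: S N as an integral
  have sum_eq : ∀ N : ℕ, S N
      = c * ∫ x in (0:ℝ)..1, Complex.exp (c2*t*x) * K N x := by
    intro N
    rw [hS]
    simp only []
    calc (∑ k ∈ Finset.Icc (-(N:ℤ)) (N:ℤ), Complex.exp (c2*(φ:ℂ)*(k:ℂ)) / ((k:ℂ) - t))
        = ∑ k ∈ Finset.Icc (-(N:ℤ)) (N:ℤ), c * ∫ x in (0:ℝ)..1,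
            Complex.exp (c2*t*x) * Complex.exp (c2*(k:ℂ)*((φ:ℂ)-(x:ℝ))) :=
          Finset.sum_congr rfl (fun k _ => term_eq k)
      _ = c * ∑ k ∈ Finset.Icc (-(N:ℤ)) (N:ℤ), ∫ x in (0:ℝ)..1,
            Complex.exp (c2*t*x) * Complex.exp (c2*(k:ℂ)*((φ:ℂ)-(x:ℝ))) :=
          (Finset.mul_sum _ _ _).symm
      _ = c * ∫ x in (0:ℝ)..1, ∑ k ∈ Finset.Icc (-(N:ℤ)) (N:ℤ),
            Complex.exp (c2*t*x) * Complex.exp (c2*(k:ℂ)*((φ:ℂ)-(x:ℝ))) := by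
          congr 1
          rw [intervalIntegral.integral_finset_sum]
          intro k _
          exact (cont_e.mul (Complex.continuous_exp.comp
            (continuous_const.mul (continuous_const.sub Complex.continuous_ofReal)))).intervalIntegrable _ _
      _ = c * ∫ x in (0:ℝ)..1, Complex.exp (c2*t*x) * K N x := by
          congr 1
          apply intervalIntegral.integral_congr
          intro x _
          rw [hK]
          simp only [Finset.mul_sum]
  -- step 3: delta integrals and L as an integral
  have delta : ∀ k : ℤ, (∫ x in (0:ℝ)..1, Complex.exp (c2*(k:ℂ)*((φ:ℂ)-(x:ℝ))))
      = if k = 0 then 1 else 0 := by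
    intro k
    by_cases hk : k = 0
    · subst hk; simp
    · rw [if_neg hk]
      have hkc : ((k:ℂ)) ≠ 0 := Int.cast_ne_zero.mpr hk
      have integrand : ∀ x : ℝ, Complex.exp (c2*(k:ℂ)*((φ:ℂ)-(x:ℝ)))
          = Complex.exp (c2*(k:ℂ)*(φ:ℂ)) * Complex.exp ((-(c2*(k:ℂ)))*x) := by
        intro x
        rw [← Complex.exp_add]
        congr 1
        ring
      simp_rw [integrand]
      rw [intervalIntegral.integral_const_mul,
        integral_exp_mul_complex (neg_ne_zero.mpr (mul_ne_zero hc2ne hkc))]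
      have h1 : Complex.exp ((-(c2*(k:ℂ)))*((1:ℝ):ℂ)) = 1 := by
        rw [show (-(c2*(k:ℂ)))*((1:ℝ):ℂ) = ((-k : ℤ):ℂ)*(2*(Real.pi:ℂ)*I) by push_cast; rw [hc2]; ring]
        exact Complex.exp_int_mul_two_pi_mul_I _
      rw [h1]
      simp
  have L_eq : ∀ N : ℕ, L = c * ∫ x in (0:ℝ)..1, Complex.exp (c2*t*φ) * K N x := by
    intro N
    have : (∫ x in (0:ℝ)..1, Complex.exp (c2*t*φ) * K N x)
        = Complex.exp (c2*t*φ) := by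
      rw [intervalIntegral.integral_const_mul]
      rw [hK]
      simp only []
      have hfs := intervalIntegral.integral_finset_sum (μ := MeasureTheory.volume)
        (a := (0:ℝ)) (b := (1:ℝ)) (s := Finset.Icc (-(N:ℤ)) (N:ℤ))
        (f := fun (k:ℤ) (x:ℝ) => Complex.exp (c2*(k:ℂ)*((φ:ℂ)-(x:ℝ))))
        (fun k _ => (Complex.continuous_exp.comp (continuous_const.mul
          (continuous_const.sub Complex.continuous_ofReal))).intervalIntegrable _ _)
      rw [hfs]
      simp_rw [delta]
      rw [Finset.sum_ite_eq' (Finset.Icc (-(N:ℤ)) (N:ℤ)) (0:ℤ) (fun _ => (1:ℂ))]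
      simp
    rw [this, hL]
    congr 2
    ring
  -- step 4: difference as one integral
  have diff_eq : ∀ N : ℕ, S N - L
      = c * ∫ x in (0:ℝ)..1,
          (Complex.exp (c2*t*x) - Complex.exp (c2*t*φ)) * K N x := by
    intro N
    rw [sum_eq N, L_eq N, ← mul_sub]
    congr 1
    rw [← intervalIntegral.integral_sub (f := fun x => Complex.exp (c2*t*x) * K N x)
      (g := fun x => Complex.exp (c2*t*φ) * K N x)
      ((cont_e.mul (contK N)).intervalIntegrable _ _)
      ((continuous_const.mul (contK N)).intervalIntegrable _ _)]
    apply intervalIntegral.integral_congr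
    intro x _
    ring
  -- step 5: Riemann-Lebesgue setup
  set A : ℝ → ℂ := fun w => ∫ x in (0:ℝ)..1,
      Complex.exp (2*(Real.pi:ℂ)*I*(w:ℂ)*(x:ℝ)) * Hfun φ t x with hAdef
  have hA : Tendsto A (cocompact ℝ) (nhds 0) := rl_aux (Hfun φ t)
  have Hcont : ContinuousOn (Hfun φ t) (Set.Icc 0 1) := contOn_H φ hφ0 hφ1 t
  have Hintm : ∀ m : ℤ, IntervalIntegrable
      (fun x : ℝ => Hfun φ t x * Complex.exp (c2*(m:ℂ)*((φ:ℂ)-(x:ℝ)))) MeasureTheory.volume 0 1 := by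
    intro m
    apply ContinuousOn.intervalIntegrable
    rw [Set.uIcc_of_le (by norm_num : (0:ℝ) ≤ 1)]
    exact Hcont.mul (Continuous.continuousOn (Complex.continuous_exp.comp
      (continuous_const.mul (continuous_const.sub Complex.continuous_ofReal))))
  have Hmul : ∀ m : ℤ, (∫ x in (0:ℝ)..1, Hfun φ t x * Complex.exp (c2*(m:ℂ)*((φ:ℂ)-(x:ℝ))))
      = Complex.exp (c2*(m:ℂ)*(φ:ℂ)) * A (-(m:ℝ)) := by
    intro m
    have hsplit : ∀ x : ℝ, Hfun φ t x * Complex.exp (c2*(m:ℂ)*((φ:ℂ)-(x:ℝ)))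
        = Complex.exp (c2*(m:ℂ)*(φ:ℂ)) *
          (Complex.exp (2*(Real.pi:ℂ)*I*(((-(m:ℝ)):ℝ):ℂ)*(x:ℝ)) * Hfun φ t x) := by
      intro x
      have : Complex.exp (c2*(m:ℂ)*((φ:ℂ)-(x:ℝ)))
          = Complex.exp (c2*(m:ℂ)*(φ:ℂ)) *
            Complex.exp (2*(Real.pi:ℂ)*I*(((-(m:ℝ)):ℝ):ℂ)*(x:ℝ)) := by
        rw [← Complex.exp_add]
        congr 1
        push_cast
        rw [hc2]
        ring
      rw [this]
      ring
    simp_rw [hsplit]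
    rw [intervalIntegral.integral_const_mul, hAdef]
  -- norm of unimodular prefactors
  have hnorm1 : ∀ (m : ℤ), ‖Complex.exp (c2*(m:ℂ)*(φ:ℂ))‖ = 1 := by
    intro m
    rw [show c2*(m:ℂ)*(φ:ℂ) = 2*(Real.pi:ℂ)*I*(((m*φ : ℝ)):ℂ) by push_cast; rw [hc2]; ring]
    exact norm_exp_two_pi_I _
  -- key formula
  have key : ∀ N : ℕ, S N - L
      = c * (Complex.exp (c2*((((N:ℤ)+1):ℤ):ℂ)*(φ:ℂ)) * A (-((((N:ℤ)+1):ℤ):ℝ))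
           - Complex.exp (c2*(((-(N:ℤ)):ℤ):ℂ)*(φ:ℂ)) * A (-(((-(N:ℤ)):ℤ):ℝ))) := by
    intro N
    rw [diff_eq N]
    congr 1
    have hφne : ∀ᵐ x : ℝ ∂MeasureTheory.volume, x ≠ φ := by
      have hs : {x : ℝ | ¬ x ≠ φ} = {φ} := by ext y; simp
      rw [MeasureTheory.ae_iff, hs]
      exact MeasureTheory.measure_singleton φ
    have hcong : (∫ x in (0:ℝ)..1, (Complex.exp (c2*t*x) - Complex.exp (c2*t*φ)) * K N x)
        = ∫ x in (0:ℝ)..1, (Hfun φ t x * Complex.exp (c2*((((N:ℤ)+1):ℤ):ℂ)*((φ:ℂ)-(x:ℝ)))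
            - Hfun φ t x * Complex.exp (c2*(((-(N:ℤ)):ℤ):ℂ)*((φ:ℂ)-(x:ℝ)))) := by
      apply intervalIntegral.integral_congr_ae
      filter_upwards [hφne] with x hxφ hxmem
      have hx01 : 0 < x ∧ x ≤ 1 := by
        rwa [Set.uIoc_of_le (by norm_num : (0:ℝ) ≤ 1), Set.mem_Ioc] at hxmem
      set r : ℂ := Complex.exp (c2*((φ:ℂ)-(x:ℝ))) with hr
      have hr0 : r ≠ 0 := Complex.exp_ne_zero _
      have hr1 : r - 1 ≠ 0 := sub_ne_zero.mpr (den_ne φ x hφ0 hφ1 hx01.1.le hx01.2 hxφ)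
      have hkr : ∀ k : ℤ, Complex.exp (c2*(k:ℂ)*((φ:ℂ)-(x:ℝ))) = r ^ k := by
        intro k
        rw [hr, ← Complex.exp_int_mul]
        congr 1
        ring
      have hKr : K N x = ∑ k ∈ Finset.Icc (-(N:ℤ)) (N:ℤ), r ^ k := by
        rw [hK]
        exact Finset.sum_congr rfl (fun k _ => hkr k)
      have hH : Hfun φ t x * (r - 1) = Complex.exp (c2*t*x) - Complex.exp (c2*t*φ) := by
        simp only [Hfun, if_neg hxφ, ← hc2, ← hr]
        exact div_mul_cancel₀ _ hr1
      rw [hKr, ← hH, hkr (((N:ℤ)+1)), hkr ((-(N:ℤ)))]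
      rw [mul_assoc, kernel_eq r hr0 N, ← mul_sub]
    rw [hcong, intervalIntegral.integral_sub (Hintm ((N:ℤ)+1)) (Hintm (-(N:ℤ))),
      Hmul ((N:ℤ)+1), Hmul (-(N:ℤ))]
  -- step 6: limits
  have ha1 : Tendsto (fun N : ℕ => -((((N:ℤ)+1):ℤ):ℝ)) atTop (cocompact ℝ) := by
    have ha : Tendsto (fun N : ℕ => ((((N:ℤ)+1):ℤ):ℝ)) atTop atTop := by
      apply tendsto_atTop_mono (fun N => by push_cast; linarith [Nat.cast_nonneg (α := ℝ) N] :
        ∀ N : ℕ, (N:ℝ) ≤ ((((N:ℤ)+1):ℤ):ℝ))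
      exact tendsto_natCast_atTop_atTop
    have := tendsto_neg_atTop_atBot.comp ha
    refine this.mono_right ?_
    rw [cocompact_eq_atBot_atTop]
    exact le_sup_left
  have ha2 : Tendsto (fun N : ℕ => -(((-(N:ℤ)):ℤ):ℝ)) atTop (cocompact ℝ) := by
    have ha : Tendsto (fun N : ℕ => -(((-(N:ℤ)):ℤ):ℝ)) atTop atTop := by
      apply tendsto_atTop_mono (fun N => by push_cast; linarith :
        ∀ N : ℕ, (N:ℝ) ≤ -(((-(N:ℤ)):ℤ):ℝ))
      exact tendsto_natCast_atTop_atTop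
    refine ha.mono_right ?_
    rw [cocompact_eq_atBot_atTop]
    exact le_sup_right
  have hA1 : Tendsto (fun N : ℕ => A (-((((N:ℤ)+1):ℤ):ℝ))) atTop (nhds 0) := hA.comp ha1
  have hA2 : Tendsto (fun N : ℕ => A (-(((-(N:ℤ)):ℤ):ℝ))) atTop (nhds 0) := hA.comp ha2
  have hbound : ∀ N : ℕ, ‖S N - L‖
      ≤ ‖c‖ * (‖A (-((((N:ℤ)+1):ℤ):ℝ))‖ + ‖A (-(((-(N:ℤ)):ℤ):ℝ))‖) := by
    intro N
    rw [key N, norm_mul]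
    apply mul_le_mul_of_nonneg_left _ (norm_nonneg c)
    calc ‖_ - _‖ ≤ ‖Complex.exp (c2*((((N:ℤ)+1):ℤ):ℂ)*(φ:ℂ)) * A (-((((N:ℤ)+1):ℤ):ℝ))‖
          + ‖Complex.exp (c2*(((-(N:ℤ)):ℤ):ℂ)*(φ:ℂ)) * A (-(((-(N:ℤ)):ℤ):ℝ))‖ := norm_sub_le _ _
      _ = _ := by rw [norm_mul, norm_mul, hnorm1, hnorm1, one_mul, one_mul]
  have hbt : Tendsto (fun N : ℕ => ‖c‖ * (‖A (-((((N:ℤ)+1):ℤ):ℝ))‖ + ‖A (-(((-(N:ℤ)):ℤ):ℝ))‖))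
      atTop (nhds 0) := by
    have := ((hA1.norm).add (hA2.norm)).const_mul ‖c‖
    simpa using this
  have hfinal : Tendsto (fun N : ℕ => S N - L) atTop (nhds 0) :=
    squeeze_zero_norm hbound hbt
  have hlim : Tendsto S atTop (nhds L) := by
    rwa [← tendsto_sub_nhds_zero_iff]
  convert hlim using 2
  rw [hL, hc]
  ring
end
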